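/- (Syzygy configuration) Let I ⊆ S = ℂ[x₁,…,x_{n+1}] be a Borel-fixed monomial ideal with minimal generators x^{J₁},…,x^{J_N}, and let φ : S^N → S be the S-linear map sending the j-th standard basis vector e_j to x^{J_j}. Then: (a) for each j and each 1 ≤ i < max(J_j) there exist an index l and a monomial x^L with x_i·x^{J_j} = x^L·x^{J_l} and min(L) ≥ max(J_l); and (b) the module of first syzygies ker φ is generated by the elements x_i·e_j − x^L·e_l, ranging over all data (i, j, l, L) with 1 ≤ j ≤ N, 1 ≤ i < max(J_j), x_i·x^{J_j} = x^L·x^{J_l}, and min(L) ≥ max(J_l). -/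

import Mathlib

open MvPolynomial

noncomputable section

/-- Total degree of an exponent vector. -/
def edeg {m : ℕ} (A : Fin m →₀ ℕ) : ℕ := A.sum fun _ v => v

/-- `DRLlt A B` means `A ≺ B` in the degree reverse lexicographic order:
larger total degree is larger; among monomials of equal total degree,
`x^A ≻ x^B` iff the last nonzero entry of `A - B` is negative. -/
def DRLlt {m : ℕ} (A B : Fin m →₀ ℕ) : Prop :=
  edeg A < edeg B ∨
    (edeg A = edeg B ∧ ∃ k : Fin m, (∀ l, k < l → A l = B l) ∧ B k < A k)

/-- `μ` is the leading monomial (w.r.t. degrevlex) of the polynomial `f`. -/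
def IsLeadMonOf {m : ℕ} (μ : Fin m →₀ ℕ) (f : MvPolynomial (Fin m) ℂ) : Prop :=
  μ ∈ f.support ∧ ∀ ν ∈ f.support, ν ≠ μ → DRLlt ν μ

/-- The initial ideal of `I`: the monomial ideal generated by the degrevlex leading
monomials of the nonzero elements of `I`. -/
def initialIdeal {m : ℕ} (I : Ideal (MvPolynomial (Fin m) ℂ)) :
    Ideal (MvPolynomial (Fin m) ℂ) :=
  Ideal.span {p | ∃ μ f, f ∈ I ∧ IsLeadMonOf μ f ∧ p = monomial μ (1 : ℂ)}

/-- The monomial with exponent vector `μ` belongs to the ideal `J`. -/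
def monomialMem {m : ℕ} (μ : Fin m →₀ ℕ) (J : Ideal (MvPolynomial (Fin m) ℂ)) : Prop :=
  monomial μ (1 : ℂ) ∈ J

/-- `J` is a monomial ideal. -/
def IsMonomialIdeal {m : ℕ} (J : Ideal (MvPolynomial (Fin m) ℂ)) : Prop :=
  ∃ T : Set (Fin m →₀ ℕ), J = Ideal.span ((fun μ => monomial μ (1 : ℂ)) '' T)

/-- `J` is a Borel-fixed monomial ideal: for every monomial `x^A ∈ J` and every pair of
adjacent indices `k, l = k+1` with `A l > 0`, the monomial `x_k · x^A / x_l` is in `J`. -/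
def IsBorelFixed {m : ℕ} (J : Ideal (MvPolynomial (Fin m) ℂ)) : Prop :=
  IsMonomialIdeal J ∧
    ∀ A : Fin m →₀ ℕ, monomialMem A J → ∀ k l : Fin m, (k : ℕ) + 1 = (l : ℕ) →
      0 < A l → monomialMem (A + Finsupp.single k 1 - Finsupp.single l 1) J

/-- The image `g·I` of the ideal `I` under the algebra automorphism sending
`xᵢ` to `Σⱼ gᵢⱼ xⱼ`. -/
def matAct {m : ℕ} (g : Matrix (Fin m) (Fin m) ℂ) (I : Ideal (MvPolynomial (Fin m) ℂ)) :
    Ideal (MvPolynomial (Fin m) ℂ) :=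
  Ideal.map (MvPolynomial.aeval (fun i => ∑ j, MvPolynomial.C (g i j) * X j) :
      MvPolynomial (Fin m) ℂ →ₐ[ℂ] MvPolynomial (Fin m) ℂ) I

/-- `G` is the generic initial ideal of `I` (Galligo): `G` is a Borel-fixed monomial ideal
and there is a nonzero polynomial `P` in the matrix entries such that `in(g·I) = G`
whenever `g` is invertible and `P(g) ≠ 0`. -/
def IsGinOf {m : ℕ} (I G : Ideal (MvPolynomial (Fin m) ℂ)) : Prop :=
  IsBorelFixed G ∧
    ∃ P : MvPolynomial (Fin m × Fin m) ℂ, P ≠ 0 ∧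
      ∀ g : Matrix (Fin m) (Fin m) ℂ, IsUnit g.det →
        MvPolynomial.eval (fun p => g p.1 p.2) P ≠ 0 → initialIdeal (matAct g I) = G

/-- A homogeneous ideal (contains all homogeneous components of its members). -/
def IsHomogIdeal {m : ℕ} (I : Ideal (MvPolynomial (Fin m) ℂ)) : Prop :=
  ∀ f ∈ I, ∀ n : ℕ, MvPolynomial.homogeneousComponent n f ∈ I

/-- The homogeneous ideal of a reduced, irreducible, nondegenerate curve in ℙ³:
a homogeneous prime ideal containing no nonzero linear form, with
`dim S/I_C = 2`. -/
def IsCurveIdeal (I : Ideal (MvPolynomial (Fin 4) ℂ)) : Prop :=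
  IsHomogIdeal I ∧ I.IsPrime ∧ (∀ f ∈ I, f.IsHomogeneous 1 → f = 0) ∧
    ringKrullDim (MvPolynomial (Fin 4) ℂ ⧸ I) = 2

/-- `f(i,j) = min{k : x₁^i x₂^j x₃^k ∈ G} ∈ ℕ ∪ {∞}`. -/
def finv (G : Ideal (MvPolynomial (Fin 4) ℂ)) (i j : ℕ) : ℕ∞ :=
  sInf ((fun k : ℕ => (k : ℕ∞)) ''
    {k : ℕ | monomialMem (Finsupp.single 0 i + Finsupp.single 1 j + Finsupp.single 2 k) G})

/-- `s_k = min{i : f(i,0) ≤ k}`. -/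
def sK (G : Ideal (MvPolynomial (Fin 4) ℂ)) (k : ℕ) : ℕ :=
  sInf {i : ℕ | finv G i 0 ≤ (k : ℕ∞)}

/-- `μ_i(k) = min{j : f(i,j) ≤ k}`, the invariants of the curve. -/
def muInv (G : Ideal (MvPolynomial (Fin 4) ℂ)) (i k : ℕ) : ℕ :=
  sInf {j : ℕ | finv G i j ≤ (k : ℕ∞)}


/-- `x^μ` is a minimal generator of the monomial ideal `J`: it lies in `J` and is not a
proper multiple of another monomial of `J`. -/
def IsMinGenOf {m : ℕ} (μ : Fin m →₀ ℕ) (J : Ideal (MvPolynomial (Fin m) ℂ)) : Prop :=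
  monomialMem μ J ∧ ∀ ν : Fin m →₀ ℕ, monomialMem ν J → ν ≤ μ → ν = μ
/-- The `S`-linear map `φ : S^N → S` sending the `j`-th standard basis vector to `g j`. -/
def combMap {m N : ℕ} (g : Fin N → MvPolynomial (Fin m) ℂ) :
    (Fin N → MvPolynomial (Fin m) ℂ) →ₗ[MvPolynomial (Fin m) ℂ] MvPolynomial (Fin m) ℂ where
  toFun v := ∑ l, v l * g l
  map_add' u v := by simp [add_mul, Finset.sum_add_distrib]
  map_smul' c v := by simp [Finset.mul_sum, mul_assoc, smul_eq_mul]

/-- encoding key -/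
def skey {m : ℕ} (A : Fin m →₀ ℕ) : ℕ := ∑ p : Fin m, A p * 2 ^ (p : ℕ)

lemma skey_add {m : ℕ} (A B : Fin m →₀ ℕ) : skey (A + B) = skey A + skey B := by
  simp [skey, add_mul, Finset.sum_add_distrib]

lemma skey_single {m : ℕ} (i : Fin m) : skey (Finsupp.single i 1) = 2 ^ (i : ℕ) := by
  rw [skey, Finset.sum_eq_single i] <;> simp +contextual [Finsupp.single_apply, eq_comm]

lemma skey_mono {m : ℕ} {A B : Fin m →₀ ℕ} (h : A ≤ B) : skey A ≤ skey B := by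
  refine Finset.sum_le_sum fun p _ => Nat.mul_le_mul_right _ (h p)

lemma skey_strict_mono {m : ℕ} {A B : Fin m →₀ ℕ} (h : A ≤ B) (hne : A ≠ B) :
    skey A < skey B := by
  obtain ⟨i, hi⟩ : ∃ i, A i ≠ B i := by
    by_contra hc; push_neg at hc; exact hne (Finsupp.ext hc)
  refine Finset.sum_lt_sum (fun p _ => Nat.mul_le_mul_right _ (h p)) ⟨i, Finset.mem_univ i, ?_⟩
  exact Nat.mul_lt_mul_of_lt_of_le (lt_of_le_of_ne (h i) hi) le_rfl (by positivity)

lemma skey_le_of_mem_support {m : ℕ} {A : Fin m →₀ ℕ} {p : Fin m} (h : p ∈ A.support) :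
    2 ^ (p : ℕ) ≤ skey A := by
  calc 2 ^ (p:ℕ) ≤ A p * 2 ^ (p:ℕ) := Nat.le_mul_of_pos_left _ (Nat.pos_of_ne_zero (Finsupp.mem_support_iff.mp h))
  _ ≤ skey A := Finset.single_le_sum (f := fun q => A q * 2 ^ (q:ℕ)) (fun q _ => Nat.zero_le _) (Finset.mem_univ p)

lemma monomialMem_mono {m : ℕ} {I : Ideal (MvPolynomial (Fin m) ℂ)} {A B : Fin m →₀ ℕ}
    (hA : monomialMem A I) (h : A ≤ B) : monomialMem B I := by
  have : monomial B (1:ℂ) = monomial (B - A) (1:ℂ) * monomial A (1:ℂ) := by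
    rw [monomial_mul, one_mul, tsub_add_cancel_of_le h]
  rw [monomialMem, this]
  exact Ideal.mul_mem_left _ _ hA

lemma exists_minGen_le {m : ℕ} {I : Ideal (MvPolynomial (Fin m) ℂ)}
    (hI : IsMonomialIdeal I) {μ : Fin m →₀ ℕ} (h : monomialMem μ I) :
    ∃ ν, IsMinGenOf ν I ∧ ν ≤ μ := by
  obtain ⟨T, rfl⟩ := hI
  -- any monomial mem gives a T-elt below
  have key : ∀ ρ : Fin m →₀ ℕ, monomialMem ρ (Ideal.span ((fun μ => monomial μ (1:ℂ)) '' T)) →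
      ∃ t ∈ T, t ≤ ρ := by
    intro ρ hρ
    have := mem_ideal_span_monomial_image.mp hρ
    exact this ρ (by simp [support_monomial])
  -- minimize skey among {ν | mem ∧ ν ≤ μ}
  set S : Set ℕ := {k | ∃ ν, monomialMem ν (Ideal.span ((fun μ => monomial μ (1:ℂ)) '' T)) ∧ ν ≤ μ ∧ skey ν = k}
  have hS : (skey μ) ∈ S := ⟨μ, h, le_rfl, rfl⟩
  obtain ⟨ν, hν, hνμ, hνk⟩ := Nat.sInf_mem (s := S) ⟨_, hS⟩
  refine ⟨ν, ⟨hν, ?_⟩, hνμ⟩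
  intro ρ hρ hρν
  by_contra hne
  have h1 : skey ρ < skey ν := skey_strict_mono hρν hne
  have h2 : sInf S ≤ skey ρ := Nat.sInf_le ⟨ρ, hρ, le_trans hρν hνμ, rfl⟩
  omega


lemma swap_sub_swap {m : ℕ} (A : Fin m →₀ ℕ) (i k q : Fin m) (hik : i ≠ k) (hiq : i ≠ q)
    (hkq : k ≠ q) (hq : 0 < A q) :
    A + Finsupp.single k 1 - Finsupp.single q 1 + Finsupp.single i 1 - Finsupp.single k 1
      = A + Finsupp.single i 1 - Finsupp.single q 1 := by
  ext r
  simp only [Finsupp.tsub_apply, Finsupp.add_apply, Finsupp.single_apply]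
  by_cases h1 : k = r <;> by_cases h2 : i = r <;> by_cases h3 : q = r <;>
    simp_all

lemma borel_swap {m : ℕ} {I : Ideal (MvPolynomial (Fin m) ℂ)} (hB : IsBorelFixed I) :
    ∀ d : ℕ, ∀ A : Fin m →₀ ℕ, monomialMem A I → ∀ i q : Fin m, (q:ℕ) = (i:ℕ) + d → i < q →
      0 < A q → monomialMem (A + Finsupp.single i 1 - Finsupp.single q 1) I := by
  intro d
  induction d with
  | zero => intro A hA i q hd hiq; exact absurd (Fin.lt_iff_val_lt_val.mp hiq) (by omega)
  | succ d ih =>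
    intro A hA i q hd hiq hq
    rcases Nat.eq_zero_or_pos d with hd0 | hd0
    · exact hB.2 A hA i q (by omega) hq
    · obtain ⟨k, hk⟩ : ∃ k : Fin m, (k:ℕ) = (q:ℕ) - 1 := ⟨⟨(q:ℕ)-1, by omega⟩, rfl⟩
      have hiv : (i:ℕ) < (q:ℕ) := Fin.lt_iff_val_lt_val.mp hiq
      have hik : i < k := by rw [Fin.lt_iff_val_lt_val]; omega
      have hkq : k ≠ q := by rw [Fin.ne_iff_vne]; omega
      have hB1 := hB.2 A hA k q (by omega) hq
      have hBk : 0 < (A + Finsupp.single k 1 - Finsupp.single q 1 : Fin m →₀ ℕ) k := by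
        rw [Finsupp.tsub_apply, Finsupp.add_apply, Finsupp.single_eq_same,
          Finsupp.single_eq_of_ne' (Ne.symm hkq)]
        omega
      have := ih _ hB1 i k (by omega) hik hBk
      rwa [swap_sub_swap A i k q (Fin.ne_of_lt hik) (Fin.ne_of_lt hiq) hkq hq] at this

lemma borel_swap' {m : ℕ} {I : Ideal (MvPolynomial (Fin m) ℂ)} (hB : IsBorelFixed I)
    {A : Fin m →₀ ℕ} (hA : monomialMem A I) {i q : Fin m} (hiq : i < q) (hq : 0 < A q) :
    monomialMem (A + Finsupp.single i 1 - Finsupp.single q 1) I :=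
  borel_swap hB ((q:ℕ) - (i:ℕ)) A hA i q (by have := Fin.lt_iff_val_lt_val.mp hiq; omega) hiq hq

section Main
variable {m N : ℕ} {I : Ideal (MvPolynomial (Fin m) ℂ)} {J : Fin N → (Fin m →₀ ℕ)}

lemma memJ (hI : IsMonomialIdeal I) (hJmin : ∀ l, IsMinGenOf (J l) I)
    (hJall : ∀ μ, IsMinGenOf μ I → ∃ l, J l = μ) {μ : Fin m →₀ ℕ} :
    monomialMem μ I ↔ ∃ l, J l ≤ μ := by
  constructor
  · intro h
    obtain ⟨ν, hν, hνμ⟩ := exists_minGen_le hI h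
    obtain ⟨l, rfl⟩ := hJall ν hν
    exact ⟨l, hνμ⟩
  · rintro ⟨l, hl⟩
    exact monomialMem_mono (hJmin l).1 hl

lemma exists_canonical (hB : IsBorelFixed I) (hJmin : ∀ l, IsMinGenOf (J l) I)
    (hJall : ∀ μ, IsMinGenOf μ I → ∃ l, J l = μ) {μ : Fin m →₀ ℕ} (h : monomialMem μ I) :
    ∃ (l : Fin N) (L : Fin m →₀ ℕ), μ = L + J l ∧
      ∀ p ∈ L.support, ∀ q ∈ (J l).support, q ≤ p := by
  classical
  set T : Finset (Fin N) := Finset.univ.filter (fun l => J l ≤ μ) with hT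
  have hTne : T.Nonempty := by
    obtain ⟨l, hl⟩ := (memJ hB.1 hJmin hJall).mp h
    exact ⟨l, by simp [hT, hl]⟩
  obtain ⟨l, hlT, hlmax⟩ := T.exists_max_image (fun l => skey (μ - J l)) hTne
  have hlμ : J l ≤ μ := by simpa [hT] using hlT
  set L : Fin m →₀ ℕ := μ - J l with hLdef
  have hL : L + J l = μ := tsub_add_cancel_of_le hlμ
  refine ⟨l, L, hL.symm, ?_⟩
  by_contra hcon
  push_neg at hcon
  obtain ⟨p, hpL, q, hqJ, hpq⟩ := hcon
  have hpt : ∀ r, L r + J l r = μ r := fun r => by rw [← hL]; simp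
  have hLp : 0 < L p := Nat.pos_of_ne_zero (Finsupp.mem_support_iff.mp hpL)
  have hgq : 0 < J l q := Nat.pos_of_ne_zero (Finsupp.mem_support_iff.mp hqJ)
  have hpq' : p ≠ q := Fin.ne_of_lt hpq
  set g' : Fin m →₀ ℕ := J l + Finsupp.single p 1 - Finsupp.single q 1 with hg'
  have hg'mem : monomialMem g' I := borel_swap' hB (hJmin l).1 hpq hgq
  have hg'pt : ∀ r, (g' : Fin m →₀ ℕ) r
      = J l r + (if p = r then 1 else 0) - (if q = r then 1 else 0) := by
    intro r
    rw [hg', Finsupp.tsub_apply, Finsupp.add_apply, Finsupp.single_apply, Finsupp.single_apply]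
  have hg'le : g' ≤ μ := by
    rw [Finsupp.le_def]
    intro r
    have h1 := hg'pt r
    have h2 := hpt r
    by_cases hp : p = r
    · subst hp
      rw [if_pos rfl, if_neg (Ne.symm hpq')] at h1
      omega
    · rw [if_neg hp] at h1
      by_cases hq : q = r
      · subst hq; rw [if_pos rfl] at h1; omega
      · rw [if_neg hq] at h1; omega
  obtain ⟨l', hl'⟩ := (memJ hB.1 hJmin hJall).mp hg'mem
  have hl'T : l' ∈ T := by simp only [hT, Finset.mem_filter, Finset.mem_univ, true_and]; exact le_trans hl' hg'le
  have hkeyeq : (μ - g') + Finsupp.single p 1 = L + Finsupp.single q 1 := by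
    ext r
    have h1 := hg'pt r
    have h2 := hpt r
    rw [Finsupp.add_apply, Finsupp.add_apply, Finsupp.tsub_apply,
      Finsupp.single_apply, Finsupp.single_apply]
    by_cases hp : p = r
    · subst hp
      rw [if_pos rfl, if_neg (Ne.symm hpq')] at h1 ⊢
      omega
    · rw [if_neg hp] at h1 ⊢
      by_cases hq : q = r
      · subst hq
        rw [if_pos rfl] at h1 ⊢
        omega
      · rw [if_neg hq] at h1 ⊢
        omega
  have hkey1 : skey (μ - g') + 2 ^ (p:ℕ) = skey L + 2 ^ (q:ℕ) := by
    have := congrArg skey hkeyeq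
    rwa [skey_add, skey_add, skey_single, skey_single] at this
  have hkey2 : skey (μ - J l') ≥ skey (μ - g') := skey_mono (tsub_le_tsub_left hl' μ)
  have hkey3 : skey (μ - J l') ≤ skey L := hlmax l' hl'T
  have hpow : (2:ℕ) ^ (p:ℕ) < 2 ^ (q:ℕ) :=
    Nat.pow_lt_pow_right (by norm_num) (Fin.lt_iff_val_lt_val.mp hpq)
  omega

lemma canon_comp {a b : Fin N} {La Lb : Fin m →₀ ℕ} (hab : La + J a = Lb + J b)
    (hca : ∀ p ∈ La.support, ∀ q ∈ (J a).support, q ≤ p)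
    (hcb : ∀ p ∈ Lb.support, ∀ q ∈ (J b).support, q ≤ p)
    (hnab : ¬ J a ≤ J b) : J b ≤ J a := by
  rw [Finsupp.le_def] at hnab
  push_neg at hnab
  obtain ⟨p, hp⟩ := hnab
  rw [Finsupp.le_def]
  intro r
  by_contra hr
  push_neg at hr
  have hpt : ∀ s, La s + J a s = Lb s + J b s := fun s => by
    have := congrArg (fun f : Fin m →₀ ℕ => f s) hab; simpa using this
  have h1 := hpt p
  have h2 := hpt r
  have hpLb : p ∈ Lb.support := Finsupp.mem_support_iff.mpr (by omega)
  have hrLa : r ∈ La.support := Finsupp.mem_support_iff.mpr (by omega)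
  have hpr : p ≤ r := hca r hrLa p (Finsupp.mem_support_iff.mpr (by omega))
  have hrp : r ≤ p := hcb p hpLb r (Finsupp.mem_support_iff.mpr (by omega))
  have : p = r := le_antisymm hpr hrp
  subst this
  omega

lemma canon_unique (hJinj : Function.Injective J) (hJmin : ∀ l, IsMinGenOf (J l) I)
    {l l' : Fin N} {L L' : Fin m →₀ ℕ} (h : L + J l = L' + J l')
    (hc : ∀ p ∈ L.support, ∀ q ∈ (J l).support, q ≤ p)
    (hc' : ∀ p ∈ L'.support, ∀ q ∈ (J l').support, q ≤ p) : l = l' ∧ L = L' := by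
  have hJeq : J l = J l' := by
    by_cases hle : J l ≤ J l'
    · exact ((hJmin l').2 (J l) (hJmin l).1 hle)
    · have := canon_comp h hc hc' hle
      exact ((hJmin l).2 (J l') (hJmin l').1 this).symm
  have hll' : l = l' := hJinj hJeq
  subst hll'
  refine ⟨rfl, ?_⟩
  rw [hJeq] at h
  exact add_right_cancel h

end Main

section Syz
variable {m N : ℕ}

lemma combMap_single (g : Fin N → MvPolynomial (Fin m) ℂ) (j : Fin N)
    (a : MvPolynomial (Fin m) ℂ) : combMap g (Pi.single j a) = a * g j := by
  show (∑ l, (Pi.single j a : Fin N → MvPolynomial (Fin m) ℂ) l * g l) = a * g j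
  rw [Finset.sum_eq_single j]
  · rw [Pi.single_eq_same]
  · intro b _ hb; rw [Pi.single_eq_of_ne hb, zero_mul]
  · intro hj; exact absurd (Finset.mem_univ j) hj

variable {I : Ideal (MvPolynomial (Fin m) ℂ)} {J : Fin N → (Fin m →₀ ℕ)}

/-- the set of Eliahou–Kervaire syzygies -/
def SyzSet (J : Fin N → (Fin m →₀ ℕ)) : Set (Fin N → MvPolynomial (Fin m) ℂ) :=
  {w | ∃ (i : Fin m) (j l : Fin N) (L : Fin m →₀ ℕ),
    (∃ p ∈ (J j).support, i < p) ∧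
    Finsupp.single i 1 + J j = L + J l ∧
    (∀ p ∈ L.support, ∀ q ∈ (J l).support, q ≤ p) ∧
    w = Pi.single j (X i) - Pi.single l (monomial L (1 : ℂ))}

lemma syz_mem_ker (w : Fin N → MvPolynomial (Fin m) ℂ) (hw : w ∈ SyzSet J) :
    w ∈ LinearMap.ker (combMap fun l => monomial (J l) (1 : ℂ)) := by
  obtain ⟨i, j, l, L, _, heq, _, rfl⟩ := hw
  rw [LinearMap.mem_ker, map_sub, combMap_single, combMap_single]
  have hX : (X i : MvPolynomial (Fin m) ℂ) = monomial (Finsupp.single i 1) 1 := rfl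
  rw [hX, monomial_mul, monomial_mul, heq, one_mul]
  exact sub_self _

lemma smul_single_sub_single (s : MvPolynomial (Fin m) ℂ) (j l : Fin N)
    (a b : MvPolynomial (Fin m) ℂ) :
    s • ((Pi.single j a : Fin N → MvPolynomial (Fin m) ℂ) - Pi.single l b)
      = (Pi.single j (s * a) : Fin N → MvPolynomial (Fin m) ℂ) - Pi.single l (s * b) := by
  funext r
  simp only [Pi.smul_apply, Pi.sub_apply, smul_eq_mul, Pi.single_apply]
  split_ifs <;> simp [mul_sub]

lemma reduce_lemma (hB : IsBorelFixed I) (hJinj : Function.Injective J)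
    (hJmin : ∀ l, IsMinGenOf (J l) I) (hJall : ∀ μ, IsMinGenOf μ I → ∃ l, J l = μ)
    (μ : Fin m →₀ ℕ) (c : Fin N) (Ac : Fin m →₀ ℕ) (hceq : Ac + J c = μ)
    (hccan : ∀ p ∈ Ac.support, ∀ q ∈ (J c).support, q ≤ p) :
    ∀ (j : Fin N) (A : Fin m →₀ ℕ), A + J j = μ →
      Pi.single j (monomial A (1:ℂ)) - Pi.single c (monomial Ac (1:ℂ)) ∈
        Submodule.span (MvPolynomial (Fin m) ℂ) (SyzSet J) := by
  suffices main : ∀ t : ℕ, ∀ (j : Fin N) (A : Fin m →₀ ℕ), A + J j = μ →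
      skey μ - skey A < t →
      Pi.single j (monomial A (1:ℂ)) - Pi.single c (monomial Ac (1:ℂ)) ∈
        Submodule.span (MvPolynomial (Fin m) ℂ) (SyzSet J) by
    exact fun j A hA => main (skey μ - skey A + 1) j A hA (Nat.lt_succ_self _)
  intro t
  induction t with
  | zero => intro j A _ ht; omega
  | succ t ih =>
    intro j A hA ht
    by_cases hcanA : ∀ p ∈ A.support, ∀ q ∈ (J j).support, q ≤ p
    · obtain ⟨hjc, hAAc⟩ := canon_unique hJinj hJmin (hA.trans hceq.symm) hcanA hccan
      subst hjc; subst hAAc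
      rw [sub_self]
      exact Submodule.zero_mem _
    · push_neg at hcanA
      obtain ⟨i, hiA, q, hqJ, hiq⟩ := hcanA
      have hAi : 0 < A i := Nat.pos_of_ne_zero (Finsupp.mem_support_iff.mp hiA)
      have hJjq : 0 < J j q := Nat.pos_of_ne_zero (Finsupp.mem_support_iff.mp hqJ)
      have hμ'mem : monomialMem (Finsupp.single i 1 + J j) I :=
        (memJ hB.1 hJmin hJall).mpr ⟨j, le_add_self⟩
      obtain ⟨l, L, hLeq, hcanL⟩ := exists_canonical hB hJmin hJall hμ'mem
      have hLpt : ∀ r, (if i = r then 1 else 0) + J j r = L r + J l r := by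
        intro r
        have := congrArg (fun f : Fin m →₀ ℕ => f r) hLeq
        simpa [Finsupp.single_apply] using this
      have hL0 : L ≠ 0 := by
        rintro rfl
        rw [zero_add] at hLeq
        have hJJ : J j = J l := (hJmin l).2 (J j) (hJmin j).1 (hLeq ▸ le_add_self)
        have h5 := hLpt i
        rw [if_pos rfl, ← hJJ] at h5
        simp only [Finsupp.coe_zero, Pi.zero_apply] at h5
        omega
      obtain ⟨r0, hr0⟩ := Finsupp.support_nonempty_iff.mpr hL0
      have hrex : ∃ r ∈ L.support, i < r := by
        by_contra hcon
        push_neg at hcon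
        have hr0i : r0 ≤ i := hcon r0 hr0
        have h1 := hLpt q
        have hiq' : i ≠ q := Fin.ne_of_lt hiq
        have hLq : L q = 0 := by
          by_contra hLq
          exact absurd hiq (not_lt.mpr (hcon q (Finsupp.mem_support_iff.mpr hLq)))
        have hJlq : J l q = 0 := by
          by_contra hJlq
          have h3 : q ≤ r0 := hcanL r0 hr0 q (Finsupp.mem_support_iff.mpr hJlq)
          exact absurd hiq (not_lt.mpr (h3.trans hr0i))
        rw [if_neg hiq', hLq, hJlq] at h1
        omega
      obtain ⟨r1, hr1L, hir1⟩ := hrex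
      obtain ⟨A'', hA''def⟩ : ∃ X : Fin m →₀ ℕ, X = A - Finsupp.single i 1 + L := ⟨_, rfl⟩
      have hA''pt : ∀ r, A'' r = A r - (if i = r then 1 else 0) + L r := by
        intro r
        rw [hA''def, Finsupp.add_apply, Finsupp.tsub_apply, Finsupp.single_apply]
      have hApt : ∀ r, A r + J j r = μ r := by
        intro r
        have := congrArg (fun f : Fin m →₀ ℕ => f r) hA
        simpa using this
      have hA'' : A'' + J l = μ := by
        ext r
        rw [Finsupp.add_apply, hA''pt r]
        have h1 := hLpt r
        have h2 := hApt r
        by_cases hir : i = r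
        · subst hir; rw [if_pos rfl] at h1 ⊢; omega
        · rw [if_neg hir] at h1 ⊢; omega
      have hkeyA : skey A'' + 2 ^ (i:ℕ) = skey A + skey L := by
        have heq2 : A'' + Finsupp.single i 1 = A + L := by
          ext r
          have h6 := hA''pt r
          simp only [Finsupp.add_apply, Finsupp.single_apply]
          by_cases hir : i = r
          · subst hir
            simp only [if_pos rfl, if_true, eq_self_iff_true] at h6 ⊢
            omega
          · simp only [if_neg hir] at h6 ⊢
            omega
        have := congrArg skey heq2
        rwa [skey_add, skey_add, skey_single] at this
      have hkeyL : 2 ^ ((i:ℕ)+1) ≤ skey L := by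
        calc (2:ℕ) ^ ((i:ℕ)+1) ≤ 2 ^ (r1:ℕ) :=
              Nat.pow_le_pow_right (by norm_num) (Fin.lt_iff_val_lt_val.mp hir1)
          _ ≤ skey L := skey_le_of_mem_support hr1L
      have hkeylt : skey A < skey A'' := by
        have hpow : (2:ℕ) ^ ((i:ℕ)+1) = 2 * 2 ^ (i:ℕ) := by ring
        rw [hpow] at hkeyL
        have hpos : 0 < (2:ℕ) ^ (i:ℕ) := by positivity
        omega
      have hA''le : skey A'' ≤ skey μ := skey_mono (by rw [← hA'']; exact le_self_add)
      have ihterm := ih l A'' hA'' (by omega)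
      have hw0 : (Pi.single j (X i) - Pi.single l (monomial L (1:ℂ))) ∈ SyzSet J :=
        ⟨i, j, l, L, ⟨q, hqJ, hiq⟩, hLeq, hcanL, rfl⟩
      have hsmul : (monomial (A - Finsupp.single i 1) (1:ℂ)) •
          ((Pi.single j (X i) : Fin N → MvPolynomial (Fin m) ℂ)
            - Pi.single l (monomial L (1:ℂ)))
          = (Pi.single j (monomial A (1:ℂ)) : Fin N → MvPolynomial (Fin m) ℂ)
            - Pi.single l (monomial A'' (1:ℂ)) := by
        rw [smul_single_sub_single]
        congr 1
        · congr 1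
          have hX : (X i : MvPolynomial (Fin m) ℂ) = monomial (Finsupp.single i 1) 1 := rfl
          rw [hX, monomial_mul, one_mul,
            tsub_add_cancel_of_le (Finsupp.single_le_iff.mpr hAi)]
        · congr 1
          rw [monomial_mul, one_mul, hA''def]
      have hfirst : Pi.single j (monomial A (1:ℂ)) - Pi.single l (monomial A'' (1:ℂ)) ∈
          Submodule.span (MvPolynomial (Fin m) ℂ) (SyzSet J) := by
        rw [← hsmul]
        exact Submodule.smul_mem _ _ (Submodule.subset_span hw0)
      have hsplit : (Pi.single j (monomial A (1:ℂ)) : Fin N → MvPolynomial (Fin m) ℂ)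
            - Pi.single c (monomial Ac (1:ℂ))
          = ((Pi.single j (monomial A (1:ℂ)) : Fin N → MvPolynomial (Fin m) ℂ)
              - Pi.single l (monomial A'' (1:ℂ)))
            + ((Pi.single l (monomial A'' (1:ℂ)) : Fin N → MvPolynomial (Fin m) ℂ)
              - Pi.single c (monomial Ac (1:ℂ))) := by
        abel
      rw [hsplit]
      exact Submodule.add_mem _ hfirst ihterm

end Syz

section Final
variable {m N : ℕ} {I : Ideal (MvPolynomial (Fin m) ℂ)} {J : Fin N → (Fin m →₀ ℕ)}

lemma binom_mem (hB : IsBorelFixed I) (hJinj : Function.Injective J)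
    (hJmin : ∀ l, IsMinGenOf (J l) I) (hJall : ∀ μ, IsMinGenOf μ I → ∃ l, J l = μ)
    {j j' : Fin N} {A A' μ : Fin m →₀ ℕ} (h1 : A + J j = μ) (h2 : A' + J j' = μ) :
    (Pi.single j (monomial A (1:ℂ)) : Fin N → MvPolynomial (Fin m) ℂ)
      - Pi.single j' (monomial A' (1:ℂ)) ∈
      Submodule.span (MvPolynomial (Fin m) ℂ) (SyzSet J) := by
  have hmem : monomialMem μ I := (memJ hB.1 hJmin hJall).mpr ⟨j, h1 ▸ le_add_self⟩
  obtain ⟨cc, Ac, hceq, hccan⟩ := exists_canonical hB hJmin hJall hmem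
  have r1 := reduce_lemma hB hJinj hJmin hJall μ cc Ac hceq.symm hccan j A h1
  have r2 := reduce_lemma hB hJinj hJmin hJall μ cc Ac hceq.symm hccan j' A' h2
  have h4 : (Pi.single j (monomial A (1:ℂ)) : Fin N → MvPolynomial (Fin m) ℂ)
        - Pi.single j' (monomial A' (1:ℂ))
      = ((Pi.single j (monomial A (1:ℂ)) : Fin N → MvPolynomial (Fin m) ℂ)
          - Pi.single cc (monomial Ac (1:ℂ)))
        - ((Pi.single j' (monomial A' (1:ℂ)) : Fin N → MvPolynomial (Fin m) ℂ)
          - Pi.single cc (monomial Ac (1:ℂ))) := by abel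
  rw [h4]
  exact Submodule.sub_mem _ r1 r2

lemma ker_sub_span (hB : IsBorelFixed I) (hJinj : Function.Injective J)
    (hJmin : ∀ l, IsMinGenOf (J l) I) (hJall : ∀ μ, IsMinGenOf μ I → ∃ l, J l = μ) :
    LinearMap.ker (combMap fun l => monomial (J l) (1 : ℂ)) ≤
      Submodule.span (MvPolynomial (Fin m) ℂ) (SyzSet J) := by
  have hspanker : Submodule.span (MvPolynomial (Fin m) ℂ) (SyzSet J) ≤
      LinearMap.ker (combMap fun l => monomial (J l) (1 : ℂ)) :=
    Submodule.span_le.mpr (fun w hw => syz_mem_ker w hw)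
  intro v hv
  rw [LinearMap.mem_ker] at hv
  suffices main : ∀ t : ℕ, ∀ v : Fin N → MvPolynomial (Fin m) ℂ,
      combMap (fun l => monomial (J l) (1:ℂ)) v = 0 → (∑ r, (v r).support.card) < t →
      v ∈ Submodule.span (MvPolynomial (Fin m) ℂ) (SyzSet J) by
    exact main ((∑ r, (v r).support.card) + 1) v hv (Nat.lt_succ_self _)
  intro t
  induction t with
  | zero => intro v _ ht; omega
  | succ t ih =>
    intro v hv ht
    by_cases hv0 : v = 0
    · subst hv0; exact Submodule.zero_mem _
    · obtain ⟨j, hj⟩ := Function.ne_iff.mp hv0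
      simp only [Pi.zero_apply] at hj
      obtain ⟨A, hA⟩ := MvPolynomial.support_nonempty.mpr hj
      have hc0 : coeff A (v j) ≠ 0 := MvPolynomial.mem_support_iff.mp hA
      have hcoeff : ∀ ν, coeff ν (combMap (fun l => monomial (J l) (1:ℂ)) v)
          = ∑ l, if J l ≤ ν then coeff (ν - J l) (v l) else 0 := by
        intro ν
        show coeff ν (∑ l, v l * monomial (J l) 1) = _
        rw [coeff_sum]
        refine Finset.sum_congr rfl fun l _ => ?_
        rw [coeff_mul_monomial']
        split_ifs <;> simp
      have hzero : (∑ l, if J l ≤ A + J j then coeff (A + J j - J l) (v l) else 0) = 0 := by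
        rw [← hcoeff, hv, coeff_zero]
      have hjterm : (if J j ≤ A + J j then coeff (A + J j - J j) (v j) else 0)
          = coeff A (v j) := by
        rw [if_pos le_add_self, add_tsub_cancel_right]
      obtain ⟨j', hj'ne, hterm⟩ : ∃ j', j' ≠ j ∧
          (if J j' ≤ A + J j then coeff (A + J j - J j') (v j') else 0) ≠ 0 := by
        by_contra hcon
        push_neg at hcon
        rw [Finset.sum_eq_single j (fun b _ hb => hcon b hb)
          (fun hb => absurd (Finset.mem_univ j) hb), hjterm] at hzero
        exact hc0 hzero
      have hle : J j' ≤ A + J j := by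
        by_contra hle; rw [if_neg hle] at hterm; exact hterm rfl
      rw [if_pos hle] at hterm
      have hA'eq : (A + J j - J j') + J j' = A + J j := tsub_add_cancel_of_le hle
      set A' : Fin m →₀ ℕ := A + J j - J j' with hA'def
      set c0 : ℂ := coeff A (v j) with hc0def
      set w : Fin N → MvPolynomial (Fin m) ℂ :=
        (C c0 : MvPolynomial (Fin m) ℂ) •
          ((Pi.single j (monomial A (1:ℂ)) : Fin N → MvPolynomial (Fin m) ℂ)
          - Pi.single j' (monomial A' (1:ℂ))) with hw
      have hwK : w ∈ Submodule.span (MvPolynomial (Fin m) ℂ) (SyzSet J) := by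
        rw [hw]
        exact Submodule.smul_mem (Submodule.span (MvPolynomial (Fin m) ℂ) (SyzSet J)) (C c0) (binom_mem hB hJinj hJmin hJall rfl hA'eq)
      have hwker : combMap (fun l => monomial (J l) (1:ℂ)) w = 0 := hspanker hwK
      set v' : Fin N → MvPolynomial (Fin m) ℂ := v - w with hv'def
      have hv'ker : combMap (fun l => monomial (J l) (1:ℂ)) v' = 0 := by
        rw [hv'def, map_sub, hv, hwker, sub_zero]
      -- coefficients of v'
      have hwj : w j = monomial A c0 := by
        rw [hw]
        simp only [Pi.smul_apply, Pi.sub_apply, Pi.single_eq_same,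
          Pi.single_eq_of_ne (Ne.symm hj'ne), sub_zero, smul_eq_mul, C_mul_monomial, mul_one]
      have hwj' : w j' = -monomial A' c0 := by
        rw [hw]
        simp only [Pi.smul_apply, Pi.sub_apply, Pi.single_eq_same,
          Pi.single_eq_of_ne hj'ne, zero_sub, smul_eq_mul, mul_neg, C_mul_monomial, mul_one]
      have hwr : ∀ r, r ≠ j → r ≠ j' → w r = 0 := by
        intro r hrj hrj'
        rw [hw]
        simp only [Pi.smul_apply, Pi.sub_apply,
          Pi.single_eq_of_ne hrj, Pi.single_eq_of_ne hrj', sub_zero, smul_zero]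
      have hsuppj : (v' j).support = (v j).support.erase A := by
        ext B
        have : coeff B (v' j) = coeff B (v j) - (if A = B then c0 else 0) := by
          rw [hv'def]
          simp only [Pi.sub_apply, coeff_sub, hwj, coeff_monomial]
        rw [MvPolynomial.mem_support_iff, Finset.mem_erase, MvPolynomial.mem_support_iff, this]
        by_cases hAB : A = B
        · subst hAB; simp [hc0def]
        · simp [hAB, Ne.symm hAB]
      have hsuppj' : (v' j').support ⊆ (v j').support := by
        intro B hB
        rw [MvPolynomial.mem_support_iff] at hB ⊢
        have hcB : coeff B (v' j') = coeff B (v j') + (if A' = B then c0 else 0) := by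
          rw [hv'def]
          simp only [Pi.sub_apply, coeff_sub, hwj', coeff_neg, coeff_monomial,
            sub_neg_eq_add, coeff_add]
        rw [hcB] at hB
        by_cases hAB : A' = B
        · subst hAB; exact hterm
        · rw [if_neg hAB, add_zero] at hB; exact hB
      have hcard : (∑ r, (v' r).support.card) < ∑ r, (v r).support.card := by
        apply Finset.sum_lt_sum
        · intro r _
          by_cases hrj : r = j
          · subst hrj
            rw [hsuppj]
            exact Finset.card_le_card (Finset.erase_subset _ _)
          · by_cases hrj' : r = j'
            · subst hrj'
              exact Finset.card_le_card hsuppj'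
            · have hvr : v' r = v r := by
                rw [hv'def]; simp [hwr r hrj hrj']
              rw [hvr]
        · refine ⟨j, Finset.mem_univ j, ?_⟩
          rw [hsuppj, Finset.card_erase_of_mem hA]
          have : 0 < (v j).support.card := Finset.card_pos.mpr ⟨A, hA⟩
          omega
      have hv'mem := ih v' hv'ker (by omega)
      have : v = v' + w := by rw [hv'def]; abel
      rw [this]
      exact Submodule.add_mem _ hv'mem hwK

end Final

/-- **Syzygy configuration.**  Let `I` be a Borel-fixed monomial ideal with minimal
generators `x^{J 1}, …, x^{J N}` and let `φ : S^N → S` send `e_j ↦ x^{J j}`.  Then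
(a) for each `j` and each `i < max(J j)` there are `l` and `x^L` with
`x_i · x^{J j} = x^L · x^{J l}` and `min(L) ≥ max(J l)`; and
(b) the module of first syzygies `ker φ` is generated by the corresponding elements
`x_i • e_j − x^L • e_l`. -/
theorem syzygy_configuration
    (n N : ℕ) (I : Ideal (MvPolynomial (Fin (n + 1)) ℂ)) (hB : IsBorelFixed I)
    (J : Fin N → (Fin (n + 1) →₀ ℕ)) (hJinj : Function.Injective J)
    (hJmin : ∀ l, IsMinGenOf (J l) I) (hJall : ∀ μ, IsMinGenOf μ I → ∃ l, J l = μ) :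
    (∀ (j : Fin N) (i : Fin (n + 1)), (∃ p ∈ (J j).support, i < p) →
      ∃ (l : Fin N) (L : Fin (n + 1) →₀ ℕ),
        Finsupp.single i 1 + J j = L + J l ∧
          ∀ p ∈ L.support, ∀ q ∈ (J l).support, q ≤ p) ∧
    LinearMap.ker (combMap fun l => monomial (J l) (1 : ℂ)) =
      Submodule.span (MvPolynomial (Fin (n + 1)) ℂ)
        {w : Fin N → MvPolynomial (Fin (n + 1)) ℂ |
          ∃ (i : Fin (n + 1)) (j l : Fin N) (L : Fin (n + 1) →₀ ℕ),
            (∃ p ∈ (J j).support, i < p) ∧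
            Finsupp.single i 1 + J j = L + J l ∧
            (∀ p ∈ L.support, ∀ q ∈ (J l).support, q ≤ p) ∧
            w = Pi.single j (X i) - Pi.single l (monomial L (1 : ℂ))} := by
  constructor
  · intro j i _
    have hmem : monomialMem (Finsupp.single i 1 + J j) I :=
      (memJ hB.1 hJmin hJall).mpr ⟨j, le_add_self⟩
    obtain ⟨l, L, hLeq, hcan⟩ := exists_canonical hB hJmin hJall hmem
    exact ⟨l, L, hLeq, hcan⟩
  · apply le_antisymm
    · exact ker_sub_span hB hJinj hJmin hJall
    · exact Submodule.span_le.mpr (fun w hw => syz_mem_ker w hw)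

end
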